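/- arXiv:1708.04152 — 2 statements merged into one kernel-verified Lean document; each statement's English description precedes it below -/
import Mathlib

section
/- Let u = max{u₁, u₂} where u₁, u₂ are convex functions on ℝⁿ whose subdifferential images ∂u₁(ℝⁿ) and ∂u₂(ℝⁿ) are strongly separated by a hyperplane. Then each of the sets Σ := {u₁ = u₂}, C₁ := {u₁ > u₂}, and C₂ := {u₁ < u₂} is connected: Σ is the graph of a globally Lipschitz function h over the separating hyperplane, C₁ its open epigraph, and C₂ its open subgraph. -/
open Set

noncomputable section

/-- The subdifferential of `f : ℝⁿ → ℝ` at `x`. -/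
def subdiff {n : ℕ} (f : EuclideanSpace ℝ (Fin n) → ℝ) (x : EuclideanSpace ℝ (Fin n)) :
    Set (EuclideanSpace ℝ (Fin n)) :=
  {p | ∀ y, f x + inner ℝ p (y - x) ≤ f y}

/-- Append a last coordinate `t` to `x' ∈ ℝⁿ`, giving a point of `ℝⁿ⁺¹`. -/
def snocPt {n : ℕ} (x' : EuclideanSpace ℝ (Fin n)) (t : ℝ) :
    EuclideanSpace ℝ (Fin (n + 1)) :=
  (EuclideanSpace.equiv (Fin (n + 1)) ℝ).symm (Fin.snoc (fun i => x' i) t)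

/-- Projection onto the first `n` coordinates. -/
def projPt {n : ℕ} (x : EuclideanSpace ℝ (Fin (n + 1))) : EuclideanSpace ℝ (Fin n) :=
  (EuclideanSpace.equiv (Fin n) ℝ).symm (fun i => x i.castSucc)

variable {n : ℕ}

lemma snocPt_apply (x' : EuclideanSpace ℝ (Fin n)) (t : ℝ) (j : Fin (n+1)) :
    snocPt x' t j = Fin.snoc (α := fun _ => ℝ) (fun i => x' i) t j := rfl

@[simp] lemma snocPt_last (x' : EuclideanSpace ℝ (Fin n)) (t : ℝ) :
    snocPt x' t (Fin.last n) = t := by simp [snocPt_apply]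

@[simp] lemma snocPt_castSucc (x' : EuclideanSpace ℝ (Fin n)) (t : ℝ) (i : Fin n) :
    snocPt x' t i.castSucc = x' i := by simp [snocPt_apply]

@[simp] lemma projPt_apply (x : EuclideanSpace ℝ (Fin (n+1))) (i : Fin n) :
    projPt x i = x i.castSucc := rfl

@[simp] lemma projPt_snocPt (x' : EuclideanSpace ℝ (Fin n)) (t : ℝ) :
    projPt (snocPt x' t) = x' := by
  ext i; simp

lemma snocPt_projPt (x : EuclideanSpace ℝ (Fin (n+1))) :
    snocPt (projPt x) (x (Fin.last n)) = x := by
  ext j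
  induction j using Fin.lastCases with
  | last => simp
  | cast i => simp

lemma snocPt_sub (x' y' : EuclideanSpace ℝ (Fin n)) (s t : ℝ) :
    snocPt x' s - snocPt y' t = snocPt (x' - y') (s - t) := by
  ext j
  induction j using Fin.lastCases with
  | last => simp [PiLp.sub_apply]
  | cast i => simp [PiLp.sub_apply]

lemma norm_snocPt_zero (x' : EuclideanSpace ℝ (Fin n)) : ‖snocPt x' 0‖ = ‖x'‖ := by
  rw [EuclideanSpace.norm_eq, EuclideanSpace.norm_eq, Fin.sum_univ_castSucc]
  simp

lemma snocPt_zero_eq_smul_single (t : ℝ) :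
    snocPt (0 : EuclideanSpace ℝ (Fin n)) t = t • EuclideanSpace.single (Fin.last n) (1:ℝ) := by
  ext j
  induction j using Fin.lastCases with
  | last => simp [PiLp.smul_apply]
  | cast i =>
      simp [PiLp.smul_apply, EuclideanSpace.single_apply,
        (Fin.castSucc_lt_last i).ne, PiLp.zero_apply]

lemma inner_snocPt_zero (p : EuclideanSpace ℝ (Fin (n+1))) (t : ℝ) :
    (inner ℝ p (snocPt (0 : EuclideanSpace ℝ (Fin n)) t) : ℝ) = p (Fin.last n) * t := by
  rw [snocPt_zero_eq_smul_single, real_inner_smul_right,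
    EuclideanSpace.inner_single_right]
  simp [mul_comm]

lemma continuous_snocPt : Continuous (fun q : EuclideanSpace ℝ (Fin n) × ℝ => snocPt q.1 q.2) := by
  refine Continuous.comp (EuclideanSpace.equiv (Fin (n+1)) ℝ).symm.continuous ?_
  refine continuous_pi fun j => ?_
  induction j using Fin.lastCases with
  | last => simpa [Fin.snoc_last] using continuous_snd
  | cast i =>
      simp only [Fin.snoc_castSucc]
      exact (continuous_apply i).comp ((EuclideanSpace.equiv (Fin n) ℝ).continuous.comp continuous_fst)




lemma exists_subdiff {m : ℕ} {f : EuclideanSpace ℝ (Fin m) → ℝ}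
    (hf : ConvexOn ℝ univ f) (x₀ : EuclideanSpace ℝ (Fin m)) :
    ∃ p, p ∈ subdiff f x₀ := by
  have hcont : Continuous f := hf.locallyLipschitz.continuous
  set s : Set (EuclideanSpace ℝ (Fin m) × ℝ) := {q | f q.1 < q.2} with hs
  have hopen : IsOpen s := isOpen_lt (hcont.comp continuous_fst) continuous_snd
  have hconv : Convex ℝ s := by
    intro q hq r hr α β hα hβ hαβ
    simp only [hs, mem_setOf_eq, Prod.fst_add, Prod.smul_fst, Prod.snd_add, Prod.smul_snd,
      smul_eq_mul] at *
    have h2 := hf.2 (mem_univ q.1) (mem_univ r.1) hα hβ hαβ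
    simp only [smul_eq_mul] at h2
    rcases eq_or_lt_of_le hα with h0 | hαpos
    · have hβ1 : β = 1 := by linarith
      subst hβ1; rw [← h0]; simpa using hr
    · calc f (α • q.1 + β • r.1) ≤ α * f q.1 + β * f r.1 := h2
        _ < α * q.2 + β * r.2 := by
            have := mul_lt_mul_of_pos_left hq hαpos
            have := mul_le_mul_of_nonneg_left hr.le hβ
            linarith
  have hx₀ : (x₀, f x₀) ∉ s := by simp [hs]
  obtain ⟨l, hl⟩ := geometric_hahn_banach_open_point hconv hopen hx₀
  set c : ℝ := l ((0 : EuclideanSpace ℝ (Fin m)), (1 : ℝ)) with hc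
  have hdec : ∀ (x : EuclideanSpace ℝ (Fin m)) (t : ℝ), l (x, t) = l (x, 0) + t * c := by
    intro x t
    have hxt : (x, t) = (x, (0:ℝ)) + t • ((0:EuclideanSpace ℝ (Fin m)), (1:ℝ)) := by
      simp [Prod.ext_iff]
    rw [hxt, map_add, map_smul, smul_eq_mul]
  have key : ∀ (x : EuclideanSpace ℝ (Fin m)) (t : ℝ), f x < t → l (x, 0) + t * c < l (x₀, 0) + f x₀ * c := by
    intro x t ht
    have := hl (x, t) ht
    rw [hdec x t, hdec x₀ (f x₀)] at this
    exact this
  have hcneg : c < 0 := by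
    rcases lt_trichotomy c 0 with h | h | h
    · exact h
    · exfalso
      have := key x₀ (f x₀ + 1) (by linarith)
      rw [h] at this; linarith
    · exfalso
      -- take t large
      set T : ℝ := max (f x₀ + 1) ((l (x₀,0) + f x₀ * c - l (x₀,0)) / c + 1) with hT
      have h1 : f x₀ < T := lt_of_lt_of_le (by linarith) (le_max_left _ _)
      have h2 := key x₀ T h1
      have h3 : (l (x₀,0) + f x₀ * c - l (x₀,0)) / c + 1 ≤ T := le_max_right _ _
      have h4 : (l (x₀,0) + f x₀ * c - l (x₀,0)) / c < T := by linarith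
      have h5 : l (x₀,0) + f x₀ * c - l (x₀,0) < T * c := by
        rw [div_lt_iff₀ h] at h4; linarith
      linarith
  have hle : ∀ x : EuclideanSpace ℝ (Fin m), l (x, 0) + f x * c ≤ l (x₀, 0) + f x₀ * c := by
    intro x
    by_contra hcon
    push_neg at hcon
    set δ : ℝ := l (x,0) + f x * c - (l (x₀,0) + f x₀ * c) with hδ
    have hδpos : 0 < δ := by linarith
    have hε : (0:ℝ) < δ / (-2*c) := by
      apply div_pos hδpos; linarith
    have hne : (-2*c) ≠ 0 := by linarith
    have hmul : (δ / (-2*c)) * c = -(δ/2) := by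
      rw [div_mul_eq_mul_div, div_eq_iff hne]; ring
    have hkey := key x (f x + δ / (-2*c)) (by linarith)
    have hexp : (f x + δ/(-2*c)) * c = f x * c + -(δ/2) := by rw [add_mul, hmul]
    rw [hexp] at hkey
    have hδdef : δ = l (x,0) + f x * c - (l (x₀,0) + f x₀ * c) := hδ
    linarith
  refine ⟨(InnerProductSpace.toDual ℝ (EuclideanSpace ℝ (Fin m))).symm ((-c)⁻¹ • (l.comp (ContinuousLinearMap.inl ℝ (EuclideanSpace ℝ (Fin m)) ℝ))), ?_⟩
  intro y
  have hinner : (inner ℝ ((InnerProductSpace.toDual ℝ (EuclideanSpace ℝ (Fin m))).symm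
      ((-c)⁻¹ • (l.comp (ContinuousLinearMap.inl ℝ (EuclideanSpace ℝ (Fin m)) ℝ)))) (y - x₀) : ℝ)
      = (-c)⁻¹ * l ((y - x₀ : EuclideanSpace ℝ (Fin m)), (0:ℝ)) := by
    rw [InnerProductSpace.toDual_symm_apply]
    simp [ContinuousLinearMap.smul_apply]
  rw [hinner]
  have hsub : l ((y - x₀ : EuclideanSpace ℝ (Fin m)), (0:ℝ)) = l (y, 0) - l (x₀, 0) := by
    rw [← map_sub]; norm_num
  rw [hsub]
  have h := hle y
  have hc0 : c ≠ 0 := ne_of_lt hcneg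
  have hcinv : c⁻¹ < 0 := inv_neg''.2 hcneg
  have e : (-c)⁻¹ = -(c⁻¹) := inv_neg
  rw [e]
  have h1 : l (y,0) - l (x₀,0) ≤ f x₀ * c - f y * c := by linarith
  have h2 := mul_le_mul_of_nonneg_left h1 (show (0:ℝ) ≤ -(c⁻¹) by linarith)
  have h3 : -(c⁻¹) * (f x₀ * c - f y * c) = f y - f x₀ := by
    field_simp
    ring
  linarith
section main

variable {n : ℕ}


/-- Hyperplane-separated subdifferential images induce connected tears: if `u = max{u₁,u₂}`
with the subdifferential images of `u₁`, `u₂` strongly separated by the (coordinate)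
hyperplane `{xⁿ = a}` (that of `u₂` below, that of `u₁` above), then `{u₁ = u₂}` is the
graph of a globally Lipschitz function `h` over the hyperplane, `{u₁ > u₂}` its open
epigraph and `{u₁ < u₂}` its open subgraph, and all three sets are connected. -/
theorem separated_targets_connected_tears (n : ℕ)
    (u₁ u₂ : EuclideanSpace ℝ (Fin (n + 1)) → ℝ)
    (Ω₁ Ω₂ : Set (EuclideanSpace ℝ (Fin (n + 1))))
    (hu₁ : ConvexOn ℝ univ u₁) (hu₂ : ConvexOn ℝ univ u₂)
    (hΩ₁ : IsCompact Ω₁) (hΩ₂ : IsCompact Ω₂)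
    (hsub₁ : ∀ x, subdiff u₁ x ⊆ Ω₁) (hsub₂ : ∀ x, subdiff u₂ x ⊆ Ω₂)
    (a d : ℝ) (hd : 0 < d)
    (hsep₂ : ∀ p ∈ Ω₂, p (Fin.last n) < a - d)
    (hsep₁ : ∀ p ∈ Ω₁, a + d < p (Fin.last n)) :
    ∃ h : EuclideanSpace ℝ (Fin n) → ℝ, (∃ C : NNReal, LipschitzWith C h) ∧
      {x | u₁ x = u₂ x} = {x | x (Fin.last n) = h (projPt x)} ∧
      {x | u₂ x < u₁ x} = {x | h (projPt x) < x (Fin.last n)} ∧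
      {x | u₁ x < u₂ x} = {x | x (Fin.last n) < h (projPt x)} ∧
      IsConnected {x | u₁ x = u₂ x} ∧
      IsConnected {x | u₂ x < u₁ x} ∧
      IsConnected {x | u₁ x < u₂ x} := by
  classical
  obtain ⟨R₁, hR₁⟩ := hΩ₁.isBounded.exists_norm_le
  obtain ⟨R₂, hR₂⟩ := hΩ₂.isBounded.exists_norm_le
  set R : ℝ := max (R₁ + R₂) 0 with hRdef
  have hR0 : 0 ≤ R := le_max_right _ _
  set w : EuclideanSpace ℝ (Fin (n+1)) → ℝ := fun x => u₁ x - u₂ x with hw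
  -- Lipschitz bound for w
  have sub_le : ∀ (f : EuclideanSpace ℝ (Fin (n+1)) → ℝ) (Ω : Set (EuclideanSpace ℝ (Fin (n+1))))
      (Rf : ℝ), ConvexOn ℝ univ f → (∀ x, subdiff f x ⊆ Ω) → (∀ p ∈ Ω, ‖p‖ ≤ Rf) →
      ∀ x y, f x - f y ≤ Rf * ‖x - y‖ := by
    intro f Ω Rf hf hsub hRf x y
    obtain ⟨p, hp⟩ := exists_subdiff hf x
    have h1 := hp y
    have h2 : (inner ℝ p (x - y) : ℝ) = -(inner ℝ p (y - x)) := by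
      rw [← inner_neg_right, neg_sub]
    have h3 : (inner ℝ p (x - y) : ℝ) ≤ ‖p‖ * ‖x - y‖ := real_inner_le_norm p (x - y)
    have h4 : ‖p‖ ≤ Rf := hRf p (hsub x hp)
    have h5 : ‖p‖ * ‖x - y‖ ≤ Rf * ‖x - y‖ :=
      mul_le_mul_of_nonneg_right h4 (norm_nonneg _)
    linarith
  have wLip : ∀ x y, |w x - w y| ≤ R * ‖x - y‖ := by
    intro x y
    have hxy : ‖y - x‖ = ‖x - y‖ := norm_sub_rev y x
    have h1 := sub_le u₁ Ω₁ R₁ hu₁ hsub₁ hR₁ x y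
    have h2 := sub_le u₂ Ω₂ R₂ hu₂ hsub₂ hR₂ y x
    have h3 := sub_le u₁ Ω₁ R₁ hu₁ hsub₁ hR₁ y x
    have h4 := sub_le u₂ Ω₂ R₂ hu₂ hsub₂ hR₂ x y
    have hR' : (R₁ + R₂) * ‖x - y‖ ≤ R * ‖x - y‖ :=
      mul_le_mul_of_nonneg_right (le_max_left _ _) (norm_nonneg _)
    rw [hxy] at h2 h3
    rw [abs_le]
    constructor <;> simp only [hw] <;> nlinarith
  have wCont : Continuous w := by
    have : LipschitzWith R.toNNReal w := by
      apply LipschitzWith.of_dist_le_mul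
      intro x y
      rw [Real.dist_eq, dist_eq_norm, Real.coe_toNNReal R hR0]
      exact wLip x y
    exact this.continuous
  -- monotonicity in the last coordinate
  have mono : ∀ (x' : EuclideanSpace ℝ (Fin n)) (t s : ℝ), t ≤ s →
      w (snocPt x' t) + 2*d*(s-t) ≤ w (snocPt x' s) := by
    intro x' t s hts
    obtain ⟨p, hp⟩ := exists_subdiff hu₁ (snocPt x' t)
    have h1 := hp (snocPt x' s)
    rw [snocPt_sub, sub_self, inner_snocPt_zero] at h1
    have hA : (a+d)*(s-t) ≤ p (Fin.last n) * (s-t) :=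
      mul_le_mul_of_nonneg_right (hsep₁ p (hsub₁ _ hp)).le (by linarith)
    obtain ⟨q, hq⟩ := exists_subdiff hu₂ (snocPt x' s)
    have h2 := hq (snocPt x' t)
    rw [snocPt_sub, sub_self, inner_snocPt_zero] at h2
    have hB : (a-d)*(t-s) ≤ q (Fin.last n) * (t-s) :=
      mul_le_mul_of_nonpos_right (hsep₂ q (hsub₂ _ hq)).le (by linarith)
    simp only [hw]
    nlinarith
  -- existence of the zero level
  have exu : ∀ x' : EuclideanSpace ℝ (Fin n), ∃ t, w (snocPt x' t) = 0 := by
    intro x'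
    set g : ℝ → ℝ := fun t => w (snocPt x' t) with hg
    have hgc : Continuous g :=
      wCont.comp (continuous_snocPt.comp (Continuous.prodMk_right x'))
    set T : ℝ := |g 0| / (2*d) with hT
    have hTnn : 0 ≤ T := div_nonneg (abs_nonneg _) (by linarith)
    have h2dT : 2*d*T = |g 0| := by
      rw [hT]; field_simp
    have h1 : g (-T) ≤ 0 := by
      have := mono x' (-T) 0 (by linarith)
      have habs : g 0 ≤ |g 0| := le_abs_self _
      nlinarith [this]
    have h2 : (0:ℝ) ≤ g T := by
      have := mono x' 0 T hTnn
      have habs : -|g 0| ≤ g 0 := neg_abs_le _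
      nlinarith [this]
    have := intermediate_value_Icc (show -T ≤ T by linarith) hgc.continuousOn
    obtain ⟨t, _, ht⟩ := this ⟨h1, h2⟩
    exact ⟨t, ht⟩
  set h : EuclideanSpace ℝ (Fin n) → ℝ := fun x' => Classical.choose (exu x') with hhdef
  have hh : ∀ x', w (snocPt x' (h x')) = 0 := fun x' => Classical.choose_spec (exu x')
  -- sign lemmas
  have hlt : ∀ (x' : EuclideanSpace ℝ (Fin n)) t, t < h x' → w (snocPt x' t) < 0 := by
    intro x' t ht
    have := mono x' t (h x') ht.le
    rw [hh] at this
    nlinarith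
  have hgt : ∀ (x' : EuclideanSpace ℝ (Fin n)) t, h x' < t → 0 < w (snocPt x' t) := by
    intro x' t ht
    have := mono x' (h x') t ht.le
    rw [hh] at this
    nlinarith
  -- the three set identities
  have eq₁ : {x | u₁ x = u₂ x} = {x | x (Fin.last n) = h (projPt x)} := by
    ext x
    have hx := snocPt_projPt x
    simp only [Set.mem_setOf_eq]
    constructor
    · intro he
      have h0 : w (snocPt (projPt x) (x (Fin.last n))) = 0 := by
        rw [hx]; simp only [hw]; rw [sub_eq_zero]; exact he
      by_contra hne
      rcases lt_or_gt_of_ne hne with hc | hc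
      · exact absurd h0 (ne_of_lt (hlt _ _ hc))
      · exact absurd h0 (ne_of_gt (hgt _ _ hc))
    · intro he
      have h0 := hh (projPt x)
      rw [← he, hx] at h0
      simp only [hw] at h0
      linarith [sub_eq_zero.mp h0, h0]
  have eq₂ : {x | u₂ x < u₁ x} = {x | h (projPt x) < x (Fin.last n)} := by
    ext x
    have hx := snocPt_projPt x
    simp only [Set.mem_setOf_eq]
    constructor
    · intro he
      by_contra hne
      push_neg at hne
      rcases eq_or_lt_of_le hne with hc | hc
      · have h0 := hh (projPt x)
        rw [← hc, hx] at h0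
        simp only [hw] at h0
        linarith
      · have h0 := hlt (projPt x) _ hc
        rw [hx] at h0
        simp only [hw] at h0
        linarith
    · intro he
      have h0 := hgt (projPt x) _ he
      rw [hx] at h0
      simp only [hw] at h0
      linarith
  have eq₃ : {x | u₁ x < u₂ x} = {x | x (Fin.last n) < h (projPt x)} := by
    ext x
    have hx := snocPt_projPt x
    simp only [Set.mem_setOf_eq]
    constructor
    · intro he
      by_contra hne
      push_neg at hne
      rcases eq_or_lt_of_le hne with hc | hc
      · have h0 := hh (projPt x)
        rw [hc, hx] at h0
        simp only [hw] at h0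
        linarith
      · have h0 := hgt (projPt x) _ hc
        rw [hx] at h0
        simp only [hw] at h0
        linarith
    · intro he
      have h0 := hlt (projPt x) _ he
      rw [hx] at h0
      simp only [hw] at h0
      linarith
  -- Lipschitz bound for h
  have hd2 : (0:ℝ) < 2*d := by linarith
  have claim : ∀ x' y', h y' ≤ h x' → h x' - h y' ≤ R/(2*d) * ‖x' - y'‖ := by
    intro x' y' hle'
    have hm := mono x' (h y') (h x') hle'
    rw [hh] at hm
    have hwl := wLip (snocPt x' (h y')) (snocPt y' (h y'))
    rw [hh y', sub_zero, snocPt_sub, sub_self, norm_snocPt_zero] at hwl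
    have h1 : -(w (snocPt x' (h y'))) ≤ R * ‖x' - y'‖ := by
      have := neg_abs_le (w (snocPt x' (h y')))
      linarith [abs_le.mp hwl]
    rw [div_mul_eq_mul_div, le_div_iff₀ hd2]
    linarith
  have hLip : ∀ x' y', |h x' - h y'| ≤ R/(2*d) * ‖x' - y'‖ := by
    intro x' y'
    rcases le_total (h y') (h x') with hc | hc
    · rw [abs_of_nonneg (by linarith)]
      exact claim x' y' hc
    · rw [abs_of_nonpos (by linarith), neg_sub]
      rw [norm_sub_rev]
      exact claim y' x' hc
  have hRd0 : 0 ≤ R/(2*d) := div_nonneg hR0 (by linarith)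
  have hLipW : LipschitzWith (Real.toNNReal (R/(2*d))) h := by
    apply LipschitzWith.of_dist_le_mul
    intro x' y'
    rw [Real.dist_eq, dist_eq_norm, Real.coe_toNNReal _ hRd0]
    exact hLip x' y'
  have hhc : Continuous h := hLipW.continuous
  -- connectedness
  set ψ : EuclideanSpace ℝ (Fin n) → EuclideanSpace ℝ (Fin (n+1)) :=
    fun x' => snocPt x' (h x') with hψ
  have hψc : Continuous ψ := continuous_snocPt.comp (continuous_id.prodMk hhc)
  have graph_eq : {x : EuclideanSpace ℝ (Fin (n+1)) | x (Fin.last n) = h (projPt x)} = ψ '' univ := by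
    ext x
    simp only [image_univ, mem_range, Set.mem_setOf_eq]
    constructor
    · intro hx
      refine ⟨projPt x, ?_⟩
      simp only [hψ]
      rw [← hx]
      exact snocPt_projPt x
    · rintro ⟨x', rfl⟩
      simp [hψ]
  set φp : EuclideanSpace ℝ (Fin n) × ℝ → EuclideanSpace ℝ (Fin (n+1)) :=
    fun q => snocPt q.1 (h q.1 + q.2) with hφp
  have hφpc : Continuous φp :=
    continuous_snocPt.comp (continuous_fst.prodMk ((hhc.comp continuous_fst).add continuous_snd))
  have epi_eq : {x : EuclideanSpace ℝ (Fin (n+1)) | h (projPt x) < x (Fin.last n)}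
      = φp '' ((univ : Set (EuclideanSpace ℝ (Fin n))) ×ˢ Ioi (0:ℝ)) := by
    ext x
    simp only [Set.mem_setOf_eq, mem_image, mem_prod, mem_univ, true_and, mem_Ioi]
    constructor
    · intro hx
      refine ⟨(projPt x, x (Fin.last n) - h (projPt x)), by simpa using hx, ?_⟩
      simp only [hφp]
      have : h (projPt x) + (x (Fin.last n) - h (projPt x)) = x (Fin.last n) := by ring
      rw [this]
      exact snocPt_projPt x
    · rintro ⟨⟨x', s⟩, hs, rfl⟩
      simp only [hφp, projPt_snocPt, snocPt_last]
      simpa using hs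
  set φm : EuclideanSpace ℝ (Fin n) × ℝ → EuclideanSpace ℝ (Fin (n+1)) :=
    fun q => snocPt q.1 (h q.1 + q.2) with hφm
  have sub_eq : {x : EuclideanSpace ℝ (Fin (n+1)) | x (Fin.last n) < h (projPt x)}
      = φm '' ((univ : Set (EuclideanSpace ℝ (Fin n))) ×ˢ Iio (0:ℝ)) := by
    ext x
    simp only [Set.mem_setOf_eq, mem_image, mem_prod, mem_univ, true_and, mem_Iio]
    constructor
    · intro hx
      refine ⟨(projPt x, x (Fin.last n) - h (projPt x)), by simpa using hx, ?_⟩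
      simp only [hφm]
      have : h (projPt x) + (x (Fin.last n) - h (projPt x)) = x (Fin.last n) := by ring
      rw [this]
      exact snocPt_projPt x
    · rintro ⟨⟨x', s⟩, hs, rfl⟩
      simp only [hφm, projPt_snocPt, snocPt_last]
      simpa using hs
  refine ⟨h, ⟨Real.toNNReal (R/(2*d)), hLipW⟩, eq₁, eq₂, eq₃, ?_, ?_, ?_⟩
  · rw [eq₁, graph_eq]
    exact isConnected_univ.image ψ hψc.continuousOn
  · rw [eq₂, epi_eq]
    exact (isConnected_univ.prod isConnected_Ioi).image φp hφpc.continuousOn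
  · rw [eq₃, sub_eq]
    exact (isConnected_univ.prod isConnected_Iio).image φm hφpc.continuousOn

end main
end
end

section
/- Let u = max_{i∈I} u_i as above (u_i convex, gradients valued in disjoint compact sets Ω̄_i), and fix k ≥ 1. Suppose every subcollection of k of the sets {conv hull images at each point} is affinely independent, in the sense that for every I' ⊂ I with #I' = k, the collection {ch(Ω̄_i)}_{i∈I'} is affinely independent. Then every point of multiplicity at least k lies in some set Σ↑_{I'} := {x : u(x) = u_i(x) for all i ∈ I'} with #I' = k; that is, M_{≥k} ⊆ ∪_{#I'=k} Σ↑_{I'}. -/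
open Set

noncomputable section

/-- The multiplicity of `u` at `x` relative to the collection `Ω`: the number of indices `i`
with `∂u(x) ∩ Ω i ≠ ∅`. -/
def mult {n K : ℕ} (u : EuclideanSpace ℝ (Fin n) → ℝ)
    (Ω : Fin K → Set (EuclideanSpace ℝ (Fin n))) (x : EuclideanSpace ℝ (Fin n)) : ℕ :=
  Set.ncard {i : Fin K | (subdiff u x ∩ Ω i).Nonempty}

open MeasureTheory Topology Filter

local notation "⟪" x ", " y "⟫" => @inner ℝ _ _ x y

theorem aux_isCompact_convexHull {E : Type*} [NormedAddCommGroup E] [NormedSpace ℝ E]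
    [FiniteDimensional ℝ E] {s : Set E} (hs : IsCompact s) :
    IsCompact (convexHull ℝ s) := by
  classical
  rcases s.eq_empty_or_nonempty with rfl | hsne
  · simpa using isCompact_empty
  set d := Module.finrank ℝ E with hd
  set φ : (Fin (d+1) → ℝ) × (Fin (d+1) → E) → E := fun wz => ∑ i, wz.1 i • wz.2 i with hφ
  have hφc : Continuous φ := by
    apply continuous_finset_sum
    intro i _
    exact ((continuous_apply i).comp continuous_fst).smul
      ((continuous_apply i).comp continuous_snd)
  have hT : IsCompact ((stdSimplex ℝ (Fin (d+1))) ×ˢ (univ.pi fun _ : Fin (d+1) => s)) :=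
    (isCompact_stdSimplex _ _).prod (isCompact_univ_pi fun _ => hs)
  have himg : convexHull ℝ s = φ '' ((stdSimplex ℝ (Fin (d+1))) ×ˢ (univ.pi fun _ : Fin (d+1) => s)) := by
    apply Subset.antisymm
    · intro x hx
      obtain ⟨ι, hfin, z, w, hzs, hai, hwpos, hwsum, hwz⟩ :=
        eq_pos_convex_span_of_mem_convexHull hx
      have hcard : Fintype.card ι ≤ d + 1 := by
        refine le_trans hai.card_le_finrank_succ ?_
        have := Submodule.finrank_le (vectorSpan ℝ (Set.range z))
        omega
      obtain ⟨e⟩ := Function.Embedding.nonempty_of_card_le (by simpa using hcard :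
        Fintype.card ι ≤ Fintype.card (Fin (d+1)))
      set w' : Fin (d+1) → ℝ := fun j => if h : ∃ i, e i = j then w h.choose else 0 with hw'
      set z' : Fin (d+1) → E := fun j => if h : ∃ i, e i = j then z h.choose else hsne.choose
        with hz'
      have hkey : ∀ i : ι, w' (e i) = w i ∧ z' (e i) = z i := by
        intro i
        have h : ∃ i', e i' = e i := ⟨i, rfl⟩
        have : h.choose = i := e.injective h.choose_spec
        constructor
        · simp only [hw', dif_pos h, this]
        · simp only [hz', dif_pos h, this]
      have himage : ∀ j, j ∉ Finset.univ.image e → w' j = 0 := by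
        intro j hj
        have : ¬ ∃ i, e i = j := by
          rintro ⟨i, rfl⟩
          exact hj (Finset.mem_image_of_mem e (Finset.mem_univ i))
        simp [hw', this]
      have hsum1 : ∑ j, w' j = 1 := by
        rw [← Finset.sum_subset (Finset.subset_univ (Finset.univ.image e))
          (fun j _ hj => himage j hj)]
        rw [Finset.sum_image (fun a _ b _ h => e.injective h)]
        simp only [fun i => (hkey i).1]
        exact hwsum
      have hsum2 : ∑ j, w' j • z' j = x := by
        rw [← Finset.sum_subset (Finset.subset_univ (Finset.univ.image e))
          (fun j _ hj => by rw [himage j hj, zero_smul])]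
        rw [Finset.sum_image (fun a _ b _ h => e.injective h)]
        simp only [fun i => (hkey i).1, fun i => (hkey i).2]
        exact hwz
      refine ⟨(w', z'), ⟨?_, ?_⟩, hsum2⟩
      · constructor
        · intro j
          by_cases h : ∃ i, e i = j
          · simp only [hw', dif_pos h]; exact (hwpos _).le
          · simp [hw', h]
        · exact hsum1
      · intro j _
        by_cases h : ∃ i, e i = j
        · simp only [hz', dif_pos h]; exact hzs ⟨_, rfl⟩
        · simp only [hz', dif_neg h]; exact hsne.choose_spec
    · rintro x ⟨⟨w, z⟩, ⟨⟨hw0, hw1⟩, hz⟩, rfl⟩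
      have := Finset.centerMass_mem_convexHull (Finset.univ : Finset (Fin (d+1)))
        (fun j _ => hw0 j) (by rw [hw1]; norm_num) (fun j _ => hz j (mem_univ j))
      rwa [Finset.centerMass_eq_of_sum_1 _ _ hw1] at this
  rw [himg]
  exact hT.image hφc

theorem aux_dense_diff {n : ℕ} (f : EuclideanSpace ℝ (Fin n) → ℝ)
    (hf : ConvexOn ℝ univ f) : Dense {x | DifferentiableAt ℝ f x} := by
  have hll : LocallyLipschitz f := locallyLipschitzOn_univ.1 (hf.locallyLipschitzOn isOpen_univ)
  rw [Metric.dense_iff]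
  intro x r hr
  obtain ⟨K, t, ht, hK⟩ := hll x
  obtain ⟨δ, hδ, hball⟩ := Metric.mem_nhds_iff.1 ht
  set ε := min r δ with hε
  have hεpos : 0 < ε := lt_min hr hδ
  have hlip : LipschitzOnWith K f (Metric.ball x ε) :=
    hK.mono ((Metric.ball_subset_ball (min_le_right _ _)).trans hball)
  have hae := hlip.ae_differentiableWithinAt_of_mem (μ := volume)
  have hpos : 0 < volume (Metric.ball x ε) := Metric.measure_ball_pos _ _ hεpos
  by_contra hcon
  rw [not_nonempty_iff_eq_empty] at hcon
  have hsub : Metric.ball x ε ⊆ {z | ¬ (z ∈ Metric.ball x ε →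
      DifferentiableWithinAt ℝ f (Metric.ball x ε) z)} := by
    intro z hz
    simp only [mem_setOf_eq, _root_.not_imp]
    refine ⟨hz, fun hd => ?_⟩
    have hzd : DifferentiableAt ℝ f z :=
      hd.differentiableAt (Metric.isOpen_ball.mem_nhds hz)
    have : z ∈ Metric.ball x r ∩ {x | DifferentiableAt ℝ f x} :=
      ⟨Metric.ball_subset_ball (min_le_left _ _) hz, hzd⟩
    rw [hcon] at this
    exact this
  have : volume (Metric.ball x ε) = 0 :=
    measure_mono_null hsub (by simpa [ae_iff] using hae)
  exact absurd this hpos.ne'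

theorem aux_grad_subgrad {n : ℕ} {f : EuclideanSpace ℝ (Fin n) → ℝ}
    (hf : ConvexOn ℝ univ f) {w : EuclideanSpace ℝ (Fin n)}
    (hd : DifferentiableAt ℝ f w) (z : EuclideanSpace ℝ (Fin n)) :
    f w + ⟪gradient f w, z - w⟫ ≤ f z := by
  set v := z - w with hv
  set φ : ℝ → ℝ := fun t => f (w + t • v) with hφ
  have hpath : HasDerivAt (fun t : ℝ => w + t • v) v 0 := by
    simpa using ((hasDerivAt_id (0 : ℝ)).smul_const v).const_add w
  have hfd : HasFDerivAt f (fderiv ℝ f w) (w + (0 : ℝ) • v) := by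
    simpa using hd.hasFDerivAt
  have hφd : HasDerivAt φ (fderiv ℝ f w v) 0 := hfd.comp_hasDerivAt 0 hpath
  have hφconv : ConvexOn ℝ univ φ := by
    have := hf.comp_affineMap (AffineMap.lineMap w z : ℝ →ᵃ[ℝ] EuclideanSpace ℝ (Fin n))
    simp only [preimage_univ] at this
    suffices e : φ = f ∘ ⇑(AffineMap.lineMap w z : ℝ →ᵃ[ℝ] EuclideanSpace ℝ (Fin n)) by
      rw [e]; exact this
    funext t
    simp [hφ, AffineMap.lineMap_apply, hv]
    congr 1
    abel
  have hslope : ∀ t ∈ Ioc (0:ℝ) 1, slope φ 0 t ≤ φ 1 - φ 0 := by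
    intro t ht
    have h1 : φ t ≤ (1 - t) * φ 0 + t * φ 1 := by
      have := hφconv.2 (mem_univ (0:ℝ)) (mem_univ (1:ℝ)) (by linarith [ht.2] : (0:ℝ) ≤ 1 - t)
        ht.1.le (by ring)
      simpa [smul_eq_mul] using this
    have hs : slope φ 0 t = (φ t - φ 0) / t := by rw [slope_def_field, sub_zero]
    rw [hs, div_le_iff₀ ht.1]
    nlinarith [h1]
  have hlim : Filter.Tendsto (slope φ 0) (𝓝[>] (0:ℝ)) (𝓝 (fderiv ℝ f w v)) :=
    (hasDerivAt_iff_tendsto_slope.1 hφd).mono_left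
      (nhdsWithin_mono 0 (fun t ht => Set.mem_compl_singleton_iff.2 (ne_of_gt ht)))
  have hev : ∀ᶠ t in 𝓝[>] (0:ℝ), slope φ 0 t ≤ φ 1 - φ 0 :=
    Filter.eventually_of_mem (Ioc_mem_nhdsGT_of_mem ⟨le_refl 0, zero_lt_one⟩) hslope
  have hder_le : fderiv ℝ f w v ≤ φ 1 - φ 0 := le_of_tendsto hlim hev
  have hinner : ⟪gradient f w, z - w⟫ = fderiv ℝ f w v := by
    rw [← hv]
    exact InnerProductSpace.toDual_symm_apply
  have hφ1 : φ 1 = f z := by simp [hφ, hv]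
  have hφ0 : φ 0 = f w := by simp [hφ]
  rw [hinner]
  rw [hφ1, hφ0] at hder_le
  linarith

theorem aux_exists_subgrad {n : ℕ} {f : EuclideanSpace ℝ (Fin n) → ℝ}
    (hf : ConvexOn ℝ univ f) {Ω : Set (EuclideanSpace ℝ (Fin n))} (hcomp : IsCompact Ω)
    (hgrad : ∀ w, DifferentiableAt ℝ f w → gradient f w ∈ Ω)
    (x y : EuclideanSpace ℝ (Fin n)) :
    ∃ q ∈ Ω, f y - f x ≤ ⟪q, y - x⟫ := by
  have hd := aux_dense_diff f hf
  have hw : ∀ m : ℕ, ∃ w, dist w y < 1/(m+1) ∧ DifferentiableAt ℝ f w := by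
    intro m
    obtain ⟨z, hz1, hz2⟩ := Metric.dense_iff.1 hd y (1/(m+1)) (by positivity)
    exact ⟨z, Metric.mem_ball.1 hz1, hz2⟩
  choose w hwd hwdiff using hw
  have hwy : Filter.Tendsto w atTop (𝓝 y) := by
    rw [tendsto_iff_dist_tendsto_zero]
    apply squeeze_zero (fun m => dist_nonneg) (fun m => (hwd m).le)
    exact tendsto_one_div_add_atTop_nhds_zero_nat
  have hgΩ : ∀ m, gradient f (w m) ∈ Ω := fun m => hgrad _ (hwdiff m)
  obtain ⟨q, hqΩ, ψ, hψ, hglim⟩ := hcomp.tendsto_subseq hgΩ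
  refine ⟨q, hqΩ, ?_⟩
  have hineq : ∀ m : ℕ, f (w (ψ m)) + ⟪gradient f (w (ψ m)), x - w (ψ m)⟫ ≤ f x :=
    fun m => aux_grad_subgrad hf (hwdiff _) x
  have hcont : Continuous f :=
    (locallyLipschitzOn_univ.1 (hf.locallyLipschitzOn isOpen_univ)).continuous
  have hwψ : Filter.Tendsto (fun m => w (ψ m)) atTop (𝓝 y) := hwy.comp hψ.tendsto_atTop
  have h1 : Filter.Tendsto (fun m => f (w (ψ m))) atTop (𝓝 (f y)) :=
    (hcont.tendsto y).comp hwψ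
  have h2 : Filter.Tendsto (fun m => ⟪gradient f (w (ψ m)), x - w (ψ m)⟫) atTop
      (𝓝 ⟪q, x - y⟫) := hglim.inner (tendsto_const_nhds.sub hwψ)
  have hfin : f y + ⟪q, x - y⟫ ≤ f x :=
    le_of_tendsto (h1.add h2) (Filter.Eventually.of_forall hineq)
  have hsym : ⟪q, y - x⟫ = -⟪q, x - y⟫ := by
    rw [← inner_neg_right, neg_sub]
  linarith

theorem aux_decompose {K : ℕ} {E : Type*} [NormedAddCommGroup E] [NormedSpace ℝ E]
    (Ω : Fin K → Set E) (A : Finset (Fin K)) (hne : ∀ j ∈ A, (Ω j).Nonempty)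
    {p : E} (hp : p ∈ convexHull ℝ (⋃ j ∈ A, Ω j)) :
    ∃ (q : Fin K → E) (w : Fin K → ℝ), (∀ j ∈ A, q j ∈ convexHull ℝ (Ω j)) ∧
      (∑ j ∈ A, w j = 1) ∧ (∑ j ∈ A, w j • q j = p) := by
  classical
  rw [convexHull_eq] at hp
  obtain ⟨ι, t, w, z, hw0, hw1, hzmem, hcm⟩ := hp
  have hAne : A.Nonempty := by
    by_contra hA
    rw [Finset.not_nonempty_iff_eq_empty] at hA
    rcases t.eq_empty_or_nonempty with rfl | ⟨i, hi⟩
    · simp at hw1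
    · have := hzmem i hi
      simp [hA] at this
  obtain ⟨j0, hj0⟩ := hAne
  have hJc : ∀ i ∈ t, ∃ j ∈ A, z i ∈ Ω j := by
    intro i hi
    have := hzmem i hi
    simpa using this
  set Jc : ι → Fin K := fun i => if h : i ∈ t then (hJc i h).choose else j0 with hJcdef
  have hJcA : ∀ i ∈ t, Jc i ∈ A := by
    intro i hi; simp only [hJcdef, dif_pos hi]; exact (hJc i hi).choose_spec.1
  have hJcz : ∀ i ∈ t, z i ∈ Ω (Jc i) := by
    intro i hi; simp only [hJcdef, dif_pos hi]; exact (hJc i hi).choose_spec.2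
  set W : Fin K → ℝ := fun j => ∑ i ∈ t.filter (fun i => Jc i = j), w i with hW
  set V : Fin K → E := fun j => ∑ i ∈ t.filter (fun i => Jc i = j), w i • z i with hV
  set q : Fin K → E := fun j => if h : 0 < W j then (W j)⁻¹ • V j else
    (if hj : (Ω j).Nonempty then hj.choose else 0) with hq
  have hW0 : ∀ j, 0 ≤ W j := fun j =>
    Finset.sum_nonneg fun i hi => hw0 i (Finset.mem_filter.1 hi).1
  have hWsum : ∑ j ∈ A, W j = 1 := by
    rw [hW]
    rw [Finset.sum_fiberwise_of_maps_to hJcA]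
    exact hw1
  have hVzero : ∀ j, W j = 0 → V j = 0 := by
    intro j hj
    apply Finset.sum_eq_zero
    intro i hi
    have : w i = 0 := by
      have := (Finset.sum_eq_zero_iff_of_nonneg
        (fun i hi => hw0 i (Finset.mem_filter.1 hi).1)).1 hj i hi
      exact this
    rw [this, zero_smul]
  refine ⟨q, W, ?_, hWsum, ?_⟩
  · intro j hjA
    by_cases h : 0 < W j
    · simp only [hq, dif_pos h]
      have := Finset.centerMass_mem_convexHull (s := Ω j) (t.filter (fun i => Jc i = j))
        (fun i hi => hw0 i (Finset.mem_filter.1 hi).1) h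
        (fun i hi => (Finset.mem_filter.1 hi).2 ▸ hJcz i (Finset.mem_filter.1 hi).1)
      rw [Finset.centerMass] at this
      exact this
    · simp only [hq, dif_neg h, dif_pos (hne j hjA)]
      exact subset_convexHull ℝ _ (hne j hjA).choose_spec
  · have : ∀ j ∈ A, W j • q j = V j := by
      intro j _
      by_cases h : 0 < W j
      · simp only [hq, dif_pos h]
        rw [smul_inv_smul₀ (ne_of_gt h)]
      · have hWj : W j = 0 := le_antisymm (not_lt.1 h) (hW0 j)
        rw [hWj, zero_smul, hVzero j hWj]
    rw [Finset.sum_congr rfl this, hV, Finset.sum_fiberwise_of_maps_to hJcA]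
    rw [Finset.centerMass, hw1, inv_one, one_smul] at hcm
    exact hcm

/-- Covering multiplicity sets with tears: if every `k`-element subcollection of the convex
hulls `ch(Ω̄ i)` is affinely independent, then every point of multiplicity at least `k` lies
in some coincidence set `Σ↑_{I'} = {x : u(x) = uᵢ(x) ∀ i ∈ I'}` with `#I' = k`. -/
theorem multiplicity_covered_by_tears (n K : ℕ) (hK : 0 < K)
    (uu : Fin K → EuclideanSpace ℝ (Fin n) → ℝ)
    (Ω : Fin K → Set (EuclideanSpace ℝ (Fin n)))
    (hconv : ∀ i, ConvexOn ℝ univ (uu i))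
    (hcomp : ∀ i, IsCompact (Ω i))
    (hdisj : Pairwise (Function.onFun Disjoint Ω))
    (hgrad : ∀ i x, DifferentiableAt ℝ (uu i) x → gradient (uu i) x ∈ Ω i)
    (u : EuclideanSpace ℝ (Fin n) → ℝ) (hu : ∀ x, u x = ⨆ i, uu i x)
    (k : ℕ) (hk : 1 ≤ k)
    (hai : ∀ I' : Finset (Fin K), I'.card = k →
      ∀ p : I' → EuclideanSpace ℝ (Fin n),
        (∀ i, p i ∈ convexHull ℝ (Ω i.1)) → AffineIndependent ℝ p) :
    ∀ x, k ≤ mult u Ω x →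
      ∃ I' : Finset (Fin K), I'.card = k ∧ ∀ i ∈ I', u x = uu i x := by
  intro x hx
  classical
  have hNe : Nonempty (Fin K) := ⟨⟨0, hK⟩⟩
  have hle : ∀ (y : EuclideanSpace ℝ (Fin n)) (i), uu i y ≤ u y := by
    intro y i
    rw [hu y]
    exact le_ciSup (f := fun i => uu i y) (Set.finite_range _).bddAbove i
  set A : Finset (Fin K) := Finset.univ.filter (fun j => u x = uu j x) with hA
  have hAmem : ∀ j, j ∈ A ↔ u x = uu j x := by
    intro j; simp [hA]
  by_cases hcard : k ≤ A.card
  · obtain ⟨B, hBsub, hBcard⟩ := Finset.exists_subset_card_eq hcard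
    exact ⟨B, hBcard, fun i hi => (hAmem i).1 (hBsub hi)⟩
  push_neg at hcard
  exfalso
  have hΩne : ∀ j, (Ω j).Nonempty := by
    intro j
    obtain ⟨q, hq, -⟩ := aux_exists_subgrad (hconv j) (hcomp j) (fun w hw => hgrad j w hw) x x
    exact ⟨q, hq⟩
  set S : Set (Fin K) := {i | (subdiff u x ∩ Ω i).Nonempty} with hS
  have hSfin : S.Finite := S.toFinite
  set Sf := hSfin.toFinset with hSf
  have hScard : k ≤ Sf.card := by
    rw [← Set.ncard_eq_toFinset_card S hSfin]
    exact hx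
  have hTcard : k - A.card ≤ (Sf \ A).card :=
    le_trans (Nat.sub_le_sub_right hScard _) (Finset.le_card_sdiff A Sf)
  obtain ⟨T, hTsub, hTcardeq⟩ := Finset.exists_subset_card_eq hTcard
  have hdisjTA : Disjoint A T := by
    rw [Finset.disjoint_right]
    intro a haT haA
    exact (Finset.mem_sdiff.1 (hTsub haT)).2 haA
  set J := A ∪ T with hJ
  have hJcard : J.card = k := by
    rw [hJ, Finset.card_union_of_disjoint hdisjTA, hTcardeq]
    omega
  have hTne : T.Nonempty := by
    rw [← Finset.card_pos, hTcardeq]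
    omega
  obtain ⟨i0, hi0T⟩ := hTne
  have hpick : ∀ i ∈ Sf, ∃ p, p ∈ subdiff u x ∧ p ∈ Ω i := by
    intro i hi
    obtain ⟨p, hp1, hp2⟩ := (hSfin.mem_toFinset.1 hi : i ∈ S)
    exact ⟨p, hp1, hp2⟩
  choose! pk hpk1 hpk2 using hpick
  have hi0Sf : i0 ∈ Sf := (Finset.mem_sdiff.1 (hTsub hi0T)).1
  have hi0A : i0 ∉ A := (Finset.mem_sdiff.1 (hTsub hi0T)).2
  set p := pk i0 with hp
  have hpsub : p ∈ subdiff u x := hpk1 i0 hi0Sf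
  set U : Set (EuclideanSpace ℝ (Fin n)) := ⋃ j ∈ A, Ω j with hU
  have hUcomp : IsCompact U := A.finite_toSet.isCompact_biUnion (fun j _ => hcomp j)
  have hpC : p ∈ convexHull ℝ U := by
    by_contra hnc
    obtain ⟨l, s0, hls, hs0⟩ := geometric_hahn_banach_closed_point
      (convex_convexHull ℝ U) (aux_isCompact_convexHull hUcomp).isClosed hnc
    have hcontu : ∀ i, Continuous (uu i) := fun i =>
      (locallyLipschitzOn_univ.1 ((hconv i).locallyLipschitzOn isOpen_univ)).continuous
    set d := (InnerProductSpace.toDual ℝ (EuclideanSpace ℝ (Fin n))).symm l with hd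
    have hdip : ∀ c, ⟪d, c⟫ = l c := fun c => InnerProductSpace.toDual_symm_apply
    have hev : ∀ i ∈ Finset.univ \ A, ∀ᶠ t : ℝ in 𝓝 0,
        uu i (x + t • d) < u x + t * l p := by
      intro i hi
      have hiA : i ∉ A := (Finset.mem_sdiff.1 hi).2
      have hlt : uu i x < u x := by
        rcases lt_or_eq_of_le (hle x i) with h | h
        · exact h
        · exact absurd ((hAmem i).2 h.symm) hiA
      have hc1 : ContinuousAt (fun t : ℝ => uu i (x + t • d)) 0 :=
        ((hcontu i).comp (continuous_const.add (continuous_id.smul continuous_const))).continuousAt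
      have hc2 : ContinuousAt (fun t : ℝ => u x + t * l p) 0 :=
        (continuous_const.add (continuous_id.mul continuous_const)).continuousAt
      have h0 : (fun t : ℝ => uu i (x + t • d)) 0 < (fun t : ℝ => u x + t * l p) 0 := by
        simpa using hlt
      exact hc1.eventually_lt hc2 h0
    have hevall : ∀ᶠ t : ℝ in 𝓝 0, ∀ i ∈ Finset.univ \ A,
        uu i (x + t • d) < u x + t * l p := (Finset.univ \ A).eventually_all.2 hev
    have h5 : ∀ᶠ t : ℝ in 𝓝[>] (0:ℝ), t ∈ Ioi (0:ℝ) ∧ ∀ i ∈ Finset.univ \ A,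
        uu i (x + t • d) < u x + t * l p :=
      eventually_mem_nhdsWithin.and (hevall.filter_mono nhdsWithin_le_nhds)
    obtain ⟨t, htpos, hts⟩ := h5.exists
    have hsubd := hpsub (x + t • d)
    have hip : (inner ℝ p (x + t • d - x) : ℝ) = t * l p := by
      rw [add_sub_cancel_left, real_inner_smul_right, real_inner_comm, hdip]
    rw [hip] at hsubd
    obtain ⟨jm, hjm⟩ := Finite.exists_max (fun i => uu i (x + t • d))
    have hujm : u (x + t • d) = uu jm (x + t • d) := by
      rw [hu]
      exact le_antisymm (ciSup_le hjm)
        (le_ciSup (f := fun i => uu i (x + t • d)) (Set.finite_range _).bddAbove jm)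
    rw [hujm] at hsubd
    have hjmA : jm ∈ A := by
      by_contra hnA
      have h1 := hts jm (Finset.mem_sdiff.2 ⟨Finset.mem_univ jm, hnA⟩)
      linarith
    obtain ⟨q, hqΩ, hqb⟩ := aux_exists_subgrad (hconv jm) (hcomp jm)
      (fun w hw => hgrad jm w hw) x (x + t • d)
    have hq2 : (⟪q, x + t • d - x⟫ : ℝ) = t * l q := by
      rw [add_sub_cancel_left, real_inner_smul_right, real_inner_comm, hdip]
    rw [hq2] at hqb
    have hqU : l q < s0 := hls q (subset_convexHull ℝ U (Set.mem_biUnion hjmA hqΩ))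
    have h7 : uu jm x ≤ u x := hle x jm
    have h8 : t * l p ≤ t * l q := by linarith
    have h9 : l p ≤ l q := le_of_mul_le_mul_left h8 (mem_Ioi.1 htpos)
    linarith [hs0]
  obtain ⟨q, w, hqA, hwsum, hwq⟩ := aux_decompose Ω A (fun j _ => hΩne j) hpC
  set RR : Fin K → EuclideanSpace ℝ (Fin n) := fun i => if i ∈ A then q i else pk i with hRR
  set WW : Fin K → ℝ := fun i => if i ∈ A then w i else if i = i0 then -1 else 0 with hWW
  have hmem : ∀ i : { y // y ∈ J }, RR i.1 ∈ convexHull ℝ (Ω i.1) := by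
    intro i
    by_cases h : i.1 ∈ A
    · rw [hRR]; simp only [if_pos h]; exact hqA _ h
    · have hiT : i.1 ∈ T := by
        have h2 : i.1 ∈ A ∪ T := i.2
        rw [Finset.mem_union] at h2
        tauto
      have hiSf : i.1 ∈ Sf := (Finset.mem_sdiff.1 (hTsub hiT)).1
      rw [hRR]; simp only [if_neg h]
      exact subset_convexHull ℝ _ (hpk2 _ hiSf)
  have hAI := hai J hJcard (fun i => RR i.1) hmem
  rw [affineIndependent_iff] at hAI
  have hTnotA : ∀ i ∈ T, i ∉ A := fun i hi => (Finset.mem_sdiff.1 (hTsub hi)).2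
  have hsumW : (Finset.univ : Finset {y // y ∈ J}).sum (fun i => WW i.1) = 0 := by
    rw [Finset.univ_eq_attach, Finset.sum_attach J (fun i => WW i)]
    show (∑ i ∈ A ∪ T, WW i) = 0
    rw [Finset.sum_union hdisjTA]
    have e1 : ∑ i ∈ A, WW i = 1 := by
      rw [← hwsum]
      apply Finset.sum_congr rfl
      intro i hi
      simp only [hWW]
      rw [if_pos hi]
    have e2 : ∑ i ∈ T, WW i = -1 := by
      have h3 : ∀ i ∈ T, WW i = if i = i0 then (-1:ℝ) else 0 := by
        intro i hi
        simp only [hWW]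
        rw [if_neg (hTnotA i hi)]
      rw [Finset.sum_congr rfl h3, Finset.sum_ite_eq' T i0 (fun _ => (-1:ℝ)), if_pos hi0T]
    rw [e1, e2]; ring
  have hsumV : ∑ i : {y // y ∈ J}, WW i.1 • RR i.1 = 0 := by
    rw [Finset.univ_eq_attach, Finset.sum_attach J (fun i => WW i • RR i)]
    show (∑ i ∈ A ∪ T, WW i • RR i) = 0
    rw [Finset.sum_union hdisjTA]
    have e1 : ∑ i ∈ A, WW i • RR i = p := by
      rw [← hwq]
      apply Finset.sum_congr rfl
      intro i hi
      simp only [hWW, hRR]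
      rw [if_pos hi, if_pos hi]
    have e2 : ∑ i ∈ T, WW i • RR i = -p := by
      have h3 : ∀ i ∈ T, WW i • RR i = if i = i0 then (-1:ℝ) • pk i else 0 := by
        intro i hi
        simp only [hWW, hRR]
        rw [if_neg (hTnotA i hi), if_neg (hTnotA i hi), ite_smul, zero_smul]
      rw [Finset.sum_congr rfl h3, Finset.sum_ite_eq' T i0 (fun i => (-1:ℝ) • pk i),
        if_pos hi0T, hp, neg_one_smul]
    rw [e1, e2]; abel
  have hfin := hAI Finset.univ (fun i => WW i.1) hsumW hsumV
    ⟨i0, by rw [hJ]; exact Finset.mem_union_right _ hi0T⟩ (Finset.mem_univ _)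
  rw [hWW] at hfin
  simp only [if_neg hi0A, if_pos rfl] at hfin
  norm_num at hfin
end
end
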